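/- For all d ≥ m ≥ 1, wsat(Q_d, Q_m) ≥ (m−1)·2^d − Σ_{j=0}^{m−2} (m−1−j)·C(d,j). -/

import Mathlib

open SimpleGraph Finset

def cube (d : ℕ) : SimpleGraph (Fin d → ZMod 2) :=
  SimpleGraph.fromRel (fun u v => ∃ i, u i ≠ v i ∧ ∀ j, j ≠ i → u j = v j)

def grid (k d : ℕ) : SimpleGraph (Fin d → Fin k) :=
  SimpleGraph.fromRel (fun u v => ∃ i, ((u i : ℕ)) + 1 = (v i : ℕ) ∧ ∀ j, j ≠ i → u j = v j)

def CopyAt {α β : Type*} (H : SimpleGraph α) (G : SimpleGraph β) (u v : β) : Prop :=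
  ∃ f : α → β, Function.Injective f ∧ (∀ ⦃a b⦄, H.Adj a b → G.Adj (f a) (f b)) ∧
    ∃ a b, H.Adj a b ∧ f a = u ∧ f b = v

def ContainsCopy {α β : Type*} (H : SimpleGraph α) (G : SimpleGraph β) : Prop :=
  ∃ f : α → β, Function.Injective f ∧ ∀ ⦃a b⦄, H.Adj a b → G.Adj (f a) (f b)

def WeaklySaturated {α β : Type*} (F G : SimpleGraph β) (H : SimpleGraph α) : Prop :=
  G ≤ F ∧ ∃ (n : ℕ) (seq : ℕ → SimpleGraph β), seq 0 = G ∧ seq n = F ∧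
    ∀ i < n, ∃ u v : β, ¬ (seq i).Adj u v ∧ F.Adj u v ∧
      seq (i + 1) = seq i ⊔ SimpleGraph.fromEdgeSet {s(u, v)} ∧
      CopyAt H (seq (i + 1)) u v

noncomputable def wsatNum {α β : Type*} (F : SimpleGraph β) (H : SimpleGraph α) : ℕ :=
  sInf {n | ∃ G, WeaklySaturated F G H ∧ G.edgeSet.ncard = n}

def Saturated {α β : Type*} (F G : SimpleGraph β) (H : SimpleGraph α) : Prop :=
  G ≤ F ∧ ¬ ContainsCopy H G ∧ ∀ u v : β, F.Adj u v → ¬ G.Adj u v →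
    ContainsCopy H (G ⊔ SimpleGraph.fromEdgeSet {s(u, v)})

noncomputable def satNum {α β : Type*} (F : SimpleGraph β) (H : SimpleGraph α) : ℕ :=
  sInf {n | ∃ G, Saturated F G H ∧ G.edgeSet.ncard = n}

namespace Wsat



abbrev Vtx (d : ℕ) := Fin d → ZMod 2

def ept {d : ℕ} (i : Fin d) : Vtx d := Pi.single i 1

lemma zmod2_add_self (x : ZMod 2) : x + x = 0 := by revert x; decide

lemma zmod2_ne_iff {x y : ZMod 2} : x ≠ y ↔ y = x + 1 := by revert x y; decide

lemma ept_apply {d : ℕ} (i j : Fin d) : ept i j = if j = i then 1 else 0 := by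
  simp [ept, Pi.single_apply]

lemma add_ept_self {d : ℕ} (u : Vtx d) (i : Fin d) : u + ept i + ept i = u := by
  funext j
  simp [zmod2_add_self, add_assoc]

lemma ept_inj {d : ℕ} {i j : Fin d} (h : ept i = ept j) : i = j := by
  by_contra hne
  have := congrFun h i
  rw [ept_apply, ept_apply, if_pos rfl, if_neg hne] at this
  exact one_ne_zero this

lemma ept_add_ept {d : ℕ} {i j : Fin d} (h : ept i + ept j = 0) : i = j := by
  apply ept_inj
  funext k
  have := congrFun h k
  rw [Pi.add_apply] at this
  rw [ept_apply, ept_apply]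
  have h2 : ∀ a b : ZMod 2, a + b = 0 → a = b := by decide
  have := h2 _ _ this
  rwa [ept_apply, ept_apply] at this

lemma cube_adj {d : ℕ} {u v : Vtx d} : (cube d).Adj u v ↔ ∃ i, v = u + ept i := by
  constructor
  · rintro ⟨hne, h | h⟩ <;> obtain ⟨i, hi, hj⟩ := h
    · refine ⟨i, funext fun j => ?_⟩
      by_cases hji : j = i
      · subst hji
        rw [Pi.add_apply, ept_apply, if_pos rfl]
        exact zmod2_ne_iff.mp hi
      · rw [Pi.add_apply, ept_apply, if_neg hji, add_zero]
        exact (hj j hji).symm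
    · refine ⟨i, funext fun j => ?_⟩
      by_cases hji : j = i
      · subst hji
        rw [Pi.add_apply, ept_apply, if_pos rfl]
        exact zmod2_ne_iff.mp (Ne.symm hi)
      · rw [Pi.add_apply, ept_apply, if_neg hji, add_zero]
        exact hj j hji
  · rintro ⟨i, rfl⟩
    have hne : u i ≠ u i + 1 := by
      intro h; exact one_ne_zero (by
        have := h.symm
        have h2 : ∀ a : ZMod 2, a + 1 = a → (1 : ZMod 2) = 0 := by decide
        exact h2 _ this)
    refine ⟨fun h => hne ?_, Or.inl ⟨i, ?_, fun j hj => ?_⟩⟩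
    · conv_lhs => rw [h]
      rw [Pi.add_apply, ept_apply, if_pos rfl]
    · rw [Pi.add_apply, ept_apply, if_pos rfl]
      intro h; exact hne h
    · rw [Pi.add_apply, ept_apply, if_neg hj, add_zero]

lemma cube_adj' {d : ℕ} (u : Vtx d) (i : Fin d) : (cube d).Adj u (u + ept i) :=
  cube_adj.mpr ⟨i, rfl⟩


variable {d r : ℕ}

noncomputable def zv (d r : ℕ) (i : Fin d) : Fin r → ℝ := fun t => (i : ℝ) ^ (t : ℕ)

lemma zv_indep (T : Finset (Fin d)) (hT : T.card ≤ r) (c : Fin d → ℝ)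
    (h : ∑ i ∈ T, c i • zv d r i = 0) : ∀ i ∈ T, c i = 0 := by
  classical
  set k := T.card with hk
  let e := T.orderIsoOfFin rfl
  let x : Fin k → ℝ := fun a => ((e a : Fin d) : ℝ)
  have hxinj : Function.Injective x := by
    intro a b hab
    have : ((e a : Fin d) : ℕ) = ((e b : Fin d) : ℕ) := Nat.cast_injective hab
    exact e.injective (Subtype.ext (Fin.ext this))
  have hdet : (Matrix.vandermonde x).det ≠ 0 :=
    Matrix.det_vandermonde_ne_zero_iff.mpr hxinj
  have hvm : Matrix.vecMul (fun a => c (e a)) (Matrix.vandermonde x) = 0 := by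
    funext b
    have hb : (b : ℕ) < r := lt_of_lt_of_le b.2 hT
    have := congrFun h ⟨(b : ℕ), hb⟩
    rw [Finset.sum_apply] at this
    simp only [Pi.smul_apply, zv, smul_eq_mul, Pi.zero_apply] at this
    rw [Matrix.vecMul, Pi.zero_apply]
    rw [← this]
    rw [← Finset.sum_coe_sort T (fun i => c i * (i : ℝ) ^ (b : ℕ))]
    rw [← e.toEquiv.sum_comp (fun i => c (i : Fin d) * ((i : Fin d) : ℝ) ^ (b : ℕ))]
    rfl
  have hc0 : (fun a => c (e a)) = 0 := Matrix.eq_zero_of_vecMul_eq_zero hdet hvm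
  intro i hi
  obtain ⟨a, ha⟩ := e.surjective ⟨i, hi⟩
  have := congrFun hc0 a
  rw [ha] at this
  exact this

lemma zv_dep (S : Finset (Fin d)) (hS : S.card = r + 1) :
    ∃ lam : Fin d → ℝ, (∀ i ∈ S, lam i ≠ 0) ∧ ∑ i ∈ S, lam i • zv d r i = 0 := by
  classical
  have hnli : ¬ LinearIndependent ℝ (fun i : S => zv d r i) := by
    intro hli
    have := hli.fintype_card_le_finrank
    rw [Module.finrank_pi ℝ] at this
    simp [hS] at this
  obtain ⟨g, hsum, i0, hi0⟩ := Fintype.not_linearIndependent_iff.mp hnli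
  set lam : Fin d → ℝ := fun i => if h : i ∈ S then g ⟨i, h⟩ else 1 with hlam
  have hsum' : ∑ i ∈ S, lam i • zv d r i = 0 := by
    rw [← Finset.sum_coe_sort S (fun i => lam i • zv d r i), ← hsum]
    apply Finset.sum_congr rfl
    intro i _
    simp [hlam, i.2]
  refine ⟨lam, ?_, hsum'⟩
  intro i hi hzero
  -- if some lam i = 0 then the rest is a dependence of ≤ r vectors
  have hrest : ∑ j ∈ S.erase i, lam j • zv d r j = 0 := by
    have h2 := Finset.add_sum_erase S (fun j => lam j • zv d r j) hi
    simp only [hzero, zero_smul, zero_add] at h2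
    rw [h2]; exact hsum'
  have hcard : (S.erase i).card ≤ r := by
    rw [Finset.card_erase_of_mem hi, hS]; omega
  have hz := zv_indep (S.erase i) hcard lam hrest
  have : ∀ j ∈ S, lam j = 0 := by
    intro j hj
    by_cases hji : j = i
    · rw [hji]; exact hzero
    · exact hz j (Finset.mem_erase.mpr ⟨hji, hj⟩)
  have := this i0 i0.2
  rw [hlam] at this
  simp only [i0.2, dif_pos] at this
  exact hi0 (by simpa using this)


variable {d r : ℕ}

noncomputable def dirv (d r : ℕ) (u v : Vtx d) : Fin r → ℝ :=
  if h : ∃ i, v = u + ept i then zv d r h.choose else 0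

lemma eq_ept_unique {u v : Vtx d} {i : Fin d} (h : v = u + ept i) (j : Fin d)
    (hj : v = u + ept j) : j = i := by
  apply ept_inj
  have : u + ept j = u + ept i := by rw [← hj, ← h]
  exact add_left_cancel this

lemma dirv_eq {u v : Vtx d} {i : Fin d} (h : v = u + ept i) : dirv d r u v = zv d r i := by
  have hex : ∃ i, v = u + ept i := ⟨i, h⟩
  rw [dirv, dif_pos hex]
  rw [eq_ept_unique h hex.choose hex.choose_spec]

lemma dirv_symm (u v : Vtx d) : dirv d r u v = dirv d r v u := by
  by_cases h : ∃ i, v = u + ept i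
  · obtain ⟨i, hi⟩ := h
    have hi' : u = v + ept i := by rw [hi, add_ept_self]
    rw [dirv_eq hi, dirv_eq hi']
  · have h' : ¬ ∃ i, u = v + ept i := by
      rintro ⟨i, hi⟩
      exact h ⟨i, by rw [hi, add_ept_self]⟩
    rw [dirv, dirv, dif_neg h, dif_neg h']

def indf (u : Vtx d) : Vtx d → ℝ := fun x => if x = u then 1 else 0

noncomputable def Wp (d r : ℕ) (u v : Vtx d) : Vtx d → Fin r → ℝ :=
  fun x => (indf u x + indf v x) • dirv d r u v

lemma Wp_symm (u v : Vtx d) : Wp d r u v = Wp d r v u := by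
  funext x
  rw [Wp, Wp, add_comm (indf u x), dirv_symm]

noncomputable def W (d r : ℕ) : Sym2 (Vtx d) → (Vtx d → Fin r → ℝ) :=
  Sym2.lift ⟨fun u v => Wp d r u v, Wp_symm⟩

lemma W_mk (u v : Vtx d) : W d r s(u, v) = Wp d r u v := rfl

lemma Wp_eq {u v : Vtx d} {i : Fin d} (h : v = u + ept i) :
    Wp d r u v = fun x => (indf u x + indf v x) • zv d r i := by
  funext x; rw [Wp, dirv_eq h]

lemma ept_pair_eq {i j k l : Fin d} (h : (ept i + ept j : Vtx d) = ept k + ept l)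
    (hij : i ≠ j) (hik : i ≠ k) : j = k := by
  have hli : l = i := by
    have hc := congrFun h i
    rw [Pi.add_apply, Pi.add_apply, ept_apply, ept_apply, ept_apply, ept_apply] at hc
    rw [if_pos rfl, if_neg (fun hh : i = j => hij hh), if_neg (fun hh : i = k => hik hh)] at hc
    rw [add_zero, zero_add] at hc
    by_contra hne
    rw [if_neg (fun hh : i = l => hne hh.symm)] at hc
    exact one_ne_zero hc
  apply ept_inj
  have h2 : (ept i + ept j : Vtx d) = ept i + ept k := by
    rw [h, hli, add_comm]
  exact add_left_cancel h2


def suppF (u : Vtx d) : Finset (Fin d) := univ.filter (fun i => u i = 1)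

lemma suppF_add_ept {u : Vtx d} {i : Fin d} (hi : u i = 1) :
    suppF (u + ept i) = (suppF u).erase i := by
  ext x
  simp only [suppF, Finset.mem_filter, Finset.mem_univ, true_and, Finset.mem_erase]
  rw [Pi.add_apply, ept_apply]
  by_cases hx : x = i
  · subst hx
    rw [if_pos rfl, hi]
    simp
  · rw [if_neg hx, add_zero]
    simp [hx]

lemma card_suppF_add_ept {u : Vtx d} {i : Fin d} (hi : u i = 1) :
    (suppF (u + ept i)).card = (suppF u).card - 1 := by
  rw [suppF_add_ept hi, Finset.card_erase_of_mem]
  simp [suppF, hi]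

lemma eq_zero_of_suppF_empty {u : Vtx d} (h : (suppF u).card = 0) : u = 0 := by
  rw [Finset.card_eq_zero] at h
  funext x
  have : x ∉ suppF u := by rw [h]; exact Finset.notMem_empty x
  simp only [suppF, Finset.mem_filter, Finset.mem_univ, true_and] at this
  revert this
  have : ∀ a : ZMod 2, ¬ a = 1 → a = 0 := by decide
  intro h2
  exact this _ h2

/-- structure of injective homomorphisms from `cube m` into `cube d` -/
lemma copy_structure {m : ℕ} (f : Vtx m → Vtx d) (hinj : Function.Injective f)
    (hom : ∀ ⦃a b⦄, (cube m).Adj a b → (cube d).Adj (f a) (f b)) :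
    ∃ σ : Fin m → Fin d, Function.Injective σ ∧
      ∀ a t, f (a + ept t) = f a + ept (σ t) := by
  classical
  have hstep : ∀ (a : Vtx m) (t : Fin m), ∃ i, f (a + ept t) = f a + ept i := by
    intro a t
    exact cube_adj.mp (hom (cube_adj' a t))
  let δ : Vtx m → Fin m → Fin d := fun a t => (hstep a t).choose
  have hδ : ∀ a t, f (a + ept t) = f a + ept (δ a t) := fun a t => (hstep a t).choose_spec
  have hA : ∀ (a : Vtx m) (s t : Fin m), δ (a + ept s) t = δ a t := by
    intro a s t
    by_cases hts : t = s
    · subst hts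
      have h2 : f a = f a + (ept (δ a t) + ept (δ (a + ept t) t)) := by
        conv_lhs => rw [← add_ept_self a t, hδ (a + ept t) t, hδ a t]
        rw [add_assoc]
      have h0 : (0 : Vtx d) = ept (δ a t) + ept (δ (a + ept t) t) := by
        apply add_left_cancel (a := f a)
        rw [add_zero, ← h2]
      exact (ept_add_ept h0.symm).symm
    · set i := δ a s with hi
      set j := δ (a + ept s) t with hj
      set k := δ a t with hk
      set l := δ (a + ept t) s with hl
      have e1 : f (a + ept s + ept t) = f a + (ept i + ept j) := by
        rw [hδ (a + ept s) t, hδ a s, add_assoc]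
      have e2 : f (a + ept t + ept s) = f a + (ept k + ept l) := by
        rw [hδ (a + ept t) s, hδ a t, add_assoc]
      have hcomm : a + ept s + ept t = a + ept t + ept s := by abel
      rw [hcomm] at e1
      have e3 : (ept i + ept j : Vtx d) = ept k + ept l :=
        add_left_cancel (e1.symm.trans e2)
      have hij : i ≠ j := by
        intro hij
        have hz : (ept i + ept j : Vtx d) = 0 := by
          rw [← hij]; funext x; exact zmod2_add_self _
        have hfa : f (a + ept t + ept s) = f a := by rw [e1, hz, add_zero]
        have haa : a + ept t + ept s = a := hinj hfa
        have h0 : a + (ept t + ept s) = a + 0 := by rw [← add_assoc, haa, add_zero]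
        have : (ept t + ept s : Vtx m) = 0 := add_left_cancel h0
        exact hts (ept_add_ept this)
      have hik : i ≠ k := by
        intro hik
        have : f (a + ept s) = f (a + ept t) := by
          rw [hδ a s, hδ a t, ← hi, ← hk, hik]
        have h5 : a + ept s = a + ept t := hinj this
        have h6 : ept s = ept t := add_left_cancel h5
        exact hts (ept_inj h6).symm
      exact ept_pair_eq e3 hij hik
  -- constancy of δ
  have hB : ∀ (a : Vtx m) (t : Fin m), δ a t = δ 0 t := by
    have key : ∀ (n : ℕ) (a : Vtx m), (suppF a).card = n → ∀ t, δ a t = δ 0 t := by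
      intro n
      induction n with
      | zero =>
        intro a ha t
        rw [eq_zero_of_suppF_empty ha]
      | succ n ih =>
        intro a ha t
        have hne : suppF a ≠ ∅ := by
          intro h; rw [h] at ha; simp at ha
        obtain ⟨s, hs⟩ := Finset.nonempty_iff_ne_empty.mpr hne
        have hs1 : a s = 1 := by
          simpa [suppF] using hs
        have hstepdown : δ a t = δ (a + ept s) t := by
          have h7 := hA (a + ept s) s t
          rwa [add_ept_self] at h7
        rw [hstepdown]
        apply ih
        rw [card_suppF_add_ept hs1, ha]
        simp
    intro a t
    exact key _ a rfl t
  refine ⟨δ 0, ?_, ?_⟩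
  · intro t u htu
    have h8 : f (0 + ept t) = f (0 + ept u) := by
      rw [hδ 0 t, hδ 0 u, htu]
    exact ept_inj (add_left_cancel (hinj h8 : (0 : Vtx m) + ept t = 0 + ept u))
  · intro a t
    rw [hδ a t, hB a t]


open Submodule in
lemma step_span {m : ℕ} (hm : m = r + 1) (Γ Γ' : SimpleGraph (Vtx d)) (u v : Vtx d)
    (hne : u ≠ v) (hΓ' : Γ' = Γ ⊔ SimpleGraph.fromEdgeSet {s(u, v)}) (hle : Γ' ≤ cube d)
    (hcopy : CopyAt (cube m) Γ' u v) :
    span ℝ (W d r '' Γ'.edgeSet) ≤ span ℝ (W d r '' Γ.edgeSet) := by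
  classical
  obtain ⟨f, hinj, hhom, a, b, hab, hfa, hfb⟩ := hcopy
  have homd : ∀ ⦃x y⦄, (cube m).Adj x y → (cube d).Adj (f x) (f y) := by
    intro x y h
    exact hle (hhom h)
  obtain ⟨σ, hσinj, hσ⟩ := copy_structure f hinj homd
  set S : Finset (Fin d) := Finset.image σ Finset.univ with hSdef
  have hScard : S.card = r + 1 := by
    rw [hSdef, Finset.card_image_of_injective _ hσinj, Finset.card_univ, Fintype.card_fin, hm]
  obtain ⟨lam, hlam0, hlamsum⟩ := zv_dep S hScard
  obtain ⟨t0, ht0⟩ := cube_adj.mp hab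
  have hedgeset : Γ'.edgeSet = Γ.edgeSet ∪ ({s(u, v)} \ {e : Sym2 (Vtx d) | e.IsDiag}) := by
    rw [hΓ', SimpleGraph.edgeSet_sup, SimpleGraph.edgeSet_fromEdgeSet]
    rfl
  -- the function assigning summands
  set g : Vtx m × Fin m → (Vtx d → Fin r → ℝ) :=
    fun p => lam (σ p.2) • Wp d r (f p.1) (f (p.1 + ept p.2)) with hgdef
  have hab' : f (a + ept t0) = v := by rw [← ht0, hfb]
  have hba' : f (b + ept t0) = u := by rw [ht0, add_ept_self, hfa]
  -- claim 1 : total sum is zero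
  have claim1 : ∑ p : Vtx m × Fin m, g p = 0 := by
    funext x s
    rw [Finset.sum_apply, Finset.sum_apply]
    by_cases hx : ∃ c, x = f c
    · obtain ⟨c, rfl⟩ := hx
      have hterm : ∀ p : Vtx m × Fin m, g p (f c) =
          (lam (σ p.2) * ((if c = p.1 then (1:ℝ) else 0) + (if p.1 = c + ept p.2 then (1:ℝ) else 0))) • zv d r (σ p.2) := by
        intro p
        have e1 : indf (f p.1) (f c) = (if c = p.1 then (1:ℝ) else 0) := by
          rw [indf]
          by_cases h : c = p.1
          · rw [if_pos h, if_pos (by rw [h])]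
          · rw [if_neg h, if_neg (fun hh => h (hinj hh))]
        have e2 : indf (f (p.1 + ept p.2)) (f c) = (if p.1 = c + ept p.2 then (1:ℝ) else 0) := by
          rw [indf]
          by_cases h : p.1 = c + ept p.2
          · rw [if_pos (by rw [h, add_ept_self]), if_pos h]
          · rw [if_neg, if_neg h]
            intro hh
            apply h
            have h9 : c = p.1 + ept p.2 := hinj hh
            rw [h9, add_ept_self]
        rw [hgdef]
        simp only
        rw [Wp_eq (hσ p.1 p.2)]
        rw [Pi.smul_apply]
        show lam (σ p.2) • ((indf (f p.1) (f c) + indf (f (p.1 + ept p.2)) (f c)) • zv d r (σ p.2)) = _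
        rw [e1, e2, smul_smul]
      calc ∑ p : Vtx m × Fin m, g p (f c) s
          = ∑ p : Vtx m × Fin m, ((lam (σ p.2) * ((if c = p.1 then (1:ℝ) else 0) + (if p.1 = c + ept p.2 then (1:ℝ) else 0))) • zv d r (σ p.2)) s := by
            apply Finset.sum_congr rfl
            intro p _
            rw [hterm p]
        _ = ∑ t : Fin m, ∑ a' : Vtx m, ((lam (σ t) * ((if c = a' then (1:ℝ) else 0) + (if a' = c + ept t then (1:ℝ) else 0))) • zv d r (σ t)) s := by
            rw [Fintype.sum_prod_type, Finset.sum_comm]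
        _ = ∑ t : Fin m, 2 * (lam (σ t) * zv d r (σ t) s) := by
            apply Finset.sum_congr rfl
            intro t _
            simp only [Pi.smul_apply, smul_eq_mul]
            rw [← Finset.sum_mul, ← Finset.mul_sum, Finset.sum_add_distrib,
              Finset.sum_ite_eq, Finset.sum_ite_eq']
            simp only [Finset.mem_univ, if_true]
            ring
        _ = 2 * ∑ t : Fin m, lam (σ t) * zv d r (σ t) s := by rw [Finset.mul_sum]
        _ = 2 * ∑ i ∈ S, lam i * zv d r i s := by
            rw [hSdef, Finset.sum_image (fun x _ y _ h => hσinj h)]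
        _ = 0 := by
            have hz := congrFun hlamsum s
            rw [Finset.sum_apply] at hz
            simp only [Pi.smul_apply, smul_eq_mul, Pi.zero_apply] at hz
            rw [hz, mul_zero]
    · apply Finset.sum_eq_zero
      intro p _
      rw [hgdef]
      simp only
      rw [Wp_eq (hσ p.1 p.2), Pi.smul_apply, Pi.smul_apply]
      have h1 : indf (f p.1) x = 0 := by
        rw [indf, if_neg (fun hh => hx ⟨p.1, hh⟩)]
      have h2 : indf (f (p.1 + ept p.2)) x = 0 := by
        rw [indf, if_neg (fun hh => hx ⟨p.1 + ept p.2, hh⟩)]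
      rw [Pi.smul_apply, h1, h2]
      norm_num
  -- claim 2 : isolate the new edge
  have habne : a ≠ b := fun h => hne (by rw [← hfa, ← hfb, h])
  have hpairne : ((a, t0) : Vtx m × Fin m) ≠ (b, t0) := fun h => habne (congrArg Prod.fst h)
  set bad : Finset (Vtx m × Fin m) := {(a, t0), (b, t0)} with hbad
  have hsum_bad : ∑ p ∈ bad, g p = (2 * lam (σ t0)) • Wp d r u v := by
    rw [hbad, Finset.sum_pair hpairne, hgdef]
    simp only
    rw [hfa, hab', hfb, hba', Wp_symm v u]
    rw [two_mul, add_smul]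
  have hsplit : ∑ p ∈ (Finset.univ \ bad), g p + ∑ p ∈ bad, g p = 0 := by
    rw [Finset.sum_sdiff (Finset.subset_univ bad)]
    exact claim1
  rw [hsum_bad] at hsplit
  have key : (2 * lam (σ t0)) • Wp d r u v = - ∑ p ∈ Finset.univ \ bad, g p :=
    eq_neg_of_add_eq_zero_right hsplit
  have hlamne : lam (σ t0) ≠ 0 := hlam0 _ (Finset.mem_image.mpr ⟨t0, Finset.mem_univ t0, rfl⟩)
  have h2ne : (2 * lam (σ t0)) ≠ 0 := mul_ne_zero two_ne_zero hlamne
  have hWuv : Wp d r u v ∈ span ℝ (W d r '' Γ.edgeSet) := by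
    have hrw : Wp d r u v = (2 * lam (σ t0))⁻¹ • ((2 * lam (σ t0)) • Wp d r u v) := by
      rw [smul_smul, inv_mul_cancel₀ h2ne, one_smul]
    rw [hrw, key]
    apply Submodule.smul_mem
    apply Submodule.neg_mem
    apply Submodule.sum_mem
    intro p hp
    rw [hgdef]
    simp only
    apply Submodule.smul_mem
    apply Submodule.subset_span
    refine ⟨s(f p.1, f (p.1 + ept p.2)), ?_, W_mk _ _⟩
    have hadj : Γ'.Adj (f p.1) (f (p.1 + ept p.2)) := hhom (cube_adj' p.1 p.2)
    have hmem' : s(f p.1, f (p.1 + ept p.2)) ∈ Γ'.edgeSet := hadj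
    rw [hedgeset] at hmem'
    rcases hmem' with hm1 | ⟨hm1, -⟩
    · exact hm1
    · exfalso
      rw [Set.mem_singleton_iff, Sym2.eq_iff] at hm1
      have hpbad : p ∈ bad := by
        rcases hm1 with ⟨h1, h2⟩ | ⟨h1, h2⟩
        · have hp1 : p.1 = a := hinj (by rw [h1, hfa])
          have hp2 : p.2 = t0 := by
            apply ept_inj
            apply add_left_cancel (a := p.1)
            apply hinj
            rw [h2, hp1, ← ht0, hfb]
          rw [hbad, Finset.mem_insert]
          left
          rw [← hp1, ← hp2]
        · have hp1 : p.1 = b := hinj (by rw [h1, hfb])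
          have hp2 : p.2 = t0 := by
            apply ept_inj
            apply add_left_cancel (a := p.1)
            apply hinj
            rw [h2, hp1, hba']
          rw [hbad, Finset.mem_insert, Finset.mem_singleton]
          right
          rw [← hp1, ← hp2]
      rw [Finset.mem_sdiff] at hp
      exact hp.2 hpbad
  rw [Submodule.span_le]
  rintro x ⟨e, he, rfl⟩
  rw [hedgeset] at he
  rcases he with he | ⟨he1, -⟩
  · exact Submodule.subset_span ⟨e, he, rfl⟩
  · rw [Set.mem_singleton_iff] at he1
    rw [he1, SetLike.mem_coe, W_mk]
    exact hWuv

open Submodule in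
lemma process_span {m : ℕ} (hm : m = r + 1) {G : SimpleGraph (Vtx d)}
    (h : WeaklySaturated (cube d) G (cube m)) :
    span ℝ (W d r '' (cube d).edgeSet) ≤ span ℝ (W d r '' G.edgeSet) := by
  obtain ⟨hle, n, seq, h0, hn, hstep⟩ := h
  have hseqle : ∀ i, i ≤ n → seq i ≤ cube d := by
    intro i
    induction i with
    | zero => intro _; rw [h0]; exact hle
    | succ i ih =>
      intro hin
      have hi : i < n := hin
      obtain ⟨u, v, hnadj, hadj, hseq', hcopy⟩ := hstep i hi
      rw [hseq']
      apply sup_le (ih (le_of_lt hi))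
      intro x y hxy
      rw [SimpleGraph.fromEdgeSet_adj] at hxy
      obtain ⟨hmem, hnexy⟩ := hxy
      rw [Set.mem_singleton_iff, Sym2.eq_iff] at hmem
      rcases hmem with ⟨rfl, rfl⟩ | ⟨rfl, rfl⟩
      · exact hadj
      · exact hadj.symm
  have hspan : ∀ i, i ≤ n →
      span ℝ (W d r '' (seq i).edgeSet) ≤ span ℝ (W d r '' G.edgeSet) := by
    intro i
    induction i with
    | zero => intro _; rw [h0]
    | succ i ih =>
      intro hin
      have hi : i < n := hin
      obtain ⟨u, v, hnadj, hadj, hseq', hcopy⟩ := hstep i hi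
      refine le_trans (step_span hm (seq i) (seq (i+1)) u v hadj.ne hseq'
        (hseqle (i+1) hin) hcopy) (ih (le_of_lt hi))
  rw [← hn]
  exact hspan n le_rfl

open Submodule in
lemma card_le_of_ws {m : ℕ} (hm : m = r + 1) {G : SimpleGraph (Vtx d)}
    (h : WeaklySaturated (cube d) G (cube m)) :
    ∑ u : Vtx d, min r (suppF u).card ≤ G.edgeSet.ncard := by
  classical
  have hmin : ∀ u : Vtx d, min r (suppF u).card ≤ (suppF u).card := fun u => min_le_right _ _
  choose Su hSsub hScard using fun u : Vtx d => Finset.exists_subset_card_eq (hmin u)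
  set P : Finset (Vtx d × Fin d) :=
    Finset.univ.biUnion (fun u => (Su u).image (fun i => (u, i))) with hPdef
  have hmemP : ∀ p : Vtx d × Fin d, p ∈ P ↔ p.2 ∈ Su p.1 := by
    intro p
    rw [hPdef, Finset.mem_biUnion]
    constructor
    · rintro ⟨u, -, hp⟩
      rw [Finset.mem_image] at hp
      obtain ⟨i, hi, rfl⟩ := hp
      exact hi
    · intro hp
      exact ⟨p.1, Finset.mem_univ _, Finset.mem_image.mpr ⟨p.2, hp, rfl⟩⟩
  have hPcard : P.card = ∑ u : Vtx d, min r (suppF u).card := by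
    rw [hPdef, Finset.card_biUnion]
    · apply Finset.sum_congr rfl
      intro u _
      rw [Finset.card_image_of_injective _ (fun i j hij => (Prod.mk.injEq _ _ _ _).mp hij |>.2),
        hScard]
    · intro x _ y _ hxy
      rw [Function.onFun, Finset.disjoint_left]
      intro p hp hp'
      rw [Finset.mem_image] at hp hp'
      obtain ⟨i, -, rfl⟩ := hp
      obtain ⟨j, -, hj⟩ := hp'
      exact hxy ((Prod.mk.injEq _ _ _ _).mp hj |>.1).symm
  set Ve : Vtx d × Fin d → (Vtx d → Fin r → ℝ) :=
    fun p => W d r s(p.1, p.1 + ept p.2) with hVe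
  -- key independence statement
  have key_indep : ∀ (c : Vtx d × Fin d → ℝ),
      ∑ p ∈ P, c p • Ve p = 0 → ∀ p ∈ P, c p = 0 := by
    intro c hsum
    by_contra hcon
    push_neg at hcon
    obtain ⟨p0, hp0P, hp0⟩ := hcon
    set nz : Finset (Vtx d × Fin d) := P.filter (fun p => c p ≠ 0) with hnz
    have hnzne : nz.Nonempty := ⟨p0, Finset.mem_filter.mpr ⟨hp0P, hp0⟩⟩
    obtain ⟨pm, hpmnz, hmax⟩ := Finset.exists_max_image nz (fun p => (suppF p.1).card) hnzne
    have hpmP : pm ∈ P := (Finset.mem_filter.mp hpmnz).1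
    have hpmne : c pm ≠ 0 := (Finset.mem_filter.mp hpmnz).2
    set x : Vtx d := pm.1 with hx
    have hx0 : ∑ p ∈ P, (c p • Ve p) x = (0 : Fin r → ℝ) := by
      have hx1 := congrFun hsum x
      simp only [Finset.sum_apply, Pi.zero_apply] at hx1
      exact hx1
    have hterm : ∀ p : Vtx d × Fin d, (c p • Ve p) x =
        (c p * indf p.1 x) • zv d r p.2 + (c p * indf (p.1 + ept p.2) x) • zv d r p.2 := by
      intro p
      rw [hVe]
      simp only
      rw [W_mk, Wp_eq rfl, Pi.smul_apply]
      show c p • ((indf p.1 x + indf (p.1 + ept p.2) x) • zv d r p.2) = _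
      rw [smul_smul, mul_add, add_smul]
    rw [Finset.sum_congr rfl (fun p _ => hterm p), Finset.sum_add_distrib] at hx0
    have hB : ∑ p ∈ P, (c p * indf (p.1 + ept p.2) x) • zv d r p.2 = 0 := by
      apply Finset.sum_eq_zero
      intro p hp
      by_cases hcp : c p = 0
      · rw [hcp, zero_mul, zero_smul]
      · have hpnz : p ∈ nz := Finset.mem_filter.mpr ⟨hp, hcp⟩
        have hle2 := hmax p hpnz
        have hi : p.2 ∈ suppF p.1 := hSsub p.1 ((hmemP p).mp hp)
        have hi1 : p.1 p.2 = 1 := by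
          simpa [suppF] using hi
        have hcard1 : (suppF p.1).card ≠ 0 := by
          intro hzero
          rw [Finset.card_eq_zero] at hzero
          rw [hzero] at hi
          exact Finset.notMem_empty _ hi
        have hne2 : p.1 + ept p.2 ≠ x := by
          intro heq
          have := card_suppF_add_ept hi1
          rw [heq] at this
          omega
        rw [indf, if_neg (fun hh : x = p.1 + ept p.2 => hne2 hh.symm), mul_zero, zero_smul]
    rw [hB, add_zero] at hx0
    have hA : ∑ i ∈ Su x, (fun i => c (x, i)) i • zv d r i = 0 := by
      rw [← hx0]
      rw [Finset.sum_congr rfl (fun p (hp : p ∈ P) => by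
        rw [indf, mul_ite, mul_one, mul_zero, ite_smul, zero_smul] :
          ∀ p ∈ P, (c p * indf p.1 x) • zv d r p.2
            = if x = p.1 then c p • zv d r p.2 else 0)]
      rw [← Finset.sum_filter]
      have hPfilter : P.filter (fun p => x = p.1) = (Su x).image (fun i => (x, i)) := by
        ext p
        rw [Finset.mem_filter, Finset.mem_image]
        constructor
        · rintro ⟨hpP, hxeq⟩
          refine ⟨p.2, ?_, by rw [hxeq]⟩
          rw [hxeq]
          exact (hmemP p).mp hpP
        · rintro ⟨i, hi, rfl⟩
          exact ⟨(hmemP (x, i)).mpr hi, rfl⟩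
      rw [hPfilter, Finset.sum_image (fun i _ j _ hij => ((Prod.mk.injEq _ _ _ _).mp hij).2)]
    have hall := zv_indep (Su x) (by rw [hScard]; exact min_le_left _ _) _ hA
    have hpm2 : pm.2 ∈ Su x := (hmemP pm).mp hpmP
    have := hall pm.2 hpm2
    apply hpmne
    rw [show pm = (x, pm.2) from rfl] at this ⊢
    exact this
  -- conclude via linear algebra
  set Veci : {p // p ∈ P} → (Vtx d → Fin r → ℝ) := fun p => Ve p.1 with hVeci
  have hindep : LinearIndependent ℝ Veci := by
    rw [Fintype.linearIndependent_iff]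
    intro g hg
    set c : Vtx d × Fin d → ℝ := fun p => if h : p ∈ P then g ⟨p, h⟩ else 0 with hc
    have hcsum : ∑ p ∈ P, c p • Ve p = 0 := by
      rw [← Finset.sum_attach P (fun p => c p • Ve p)]
      rw [← hg]
      rw [Finset.univ_eq_attach]
      apply Finset.sum_congr rfl
      intro p _
      rw [hc]
      simp only [p.2, dif_pos]
      rfl
    intro i
    have := key_indep c hcsum i.1 i.2
    rw [hc] at this
    simpa [i.2] using this
  have hinspan : ∀ p : {p // p ∈ P}, Veci p ∈ span ℝ (W d r '' G.edgeSet) := by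
    intro p
    apply process_span hm h
    apply Submodule.subset_span
    exact ⟨s(p.1.1, p.1.1 + ept p.1.2), (cube d).mem_edgeSet.mpr (cube_adj' _ _), rfl⟩
  set K := span ℝ (W d r '' G.edgeSet) with hK
  set Veck : {p // p ∈ P} → K := fun p => ⟨Veci p, hinspan p⟩ with hVeck
  have hindep' : LinearIndependent ℝ Veck := by
    apply LinearIndependent.of_comp K.subtype
    exact hindep
  have hcard1 : P.card ≤ Module.finrank ℝ K := by
    have := hindep'.fintype_card_le_finrank
    rwa [Fintype.card_coe] at this
  have hfin : G.edgeSet.Finite := Set.toFinite _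
  have hcard2 : Module.finrank ℝ K ≤ G.edgeSet.ncard := by
    have himg : W d r '' G.edgeSet = ↑(hfin.toFinset.image (W d r)) := by
      rw [Finset.coe_image, Set.Finite.coe_toFinset]
    calc Module.finrank ℝ K ≤ (hfin.toFinset.image (W d r)).card := by
          rw [hK, himg]
          exact finrank_span_finset_le_card _
      _ ≤ hfin.toFinset.card := Finset.card_image_le
      _ = G.edgeSet.ncard := (Set.ncard_eq_toFinset_card _ hfin).symm
  omega

lemma suppF_injective : Function.Injective (suppF (d := d)) := by
  intro u v huv
  funext i
  have h1 : ∀ w : Vtx d, i ∈ suppF w ↔ w i = 1 := by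
    intro w; simp [suppF]
  have h2 : ∀ a : ZMod 2, ¬ a = 1 → a = 0 := by decide
  by_cases hi : i ∈ suppF u
  · have hu := (h1 u).mp hi
    have hv := (h1 v).mp (huv ▸ hi)
    rw [hu, hv]
  · have hu := h2 _ (fun hh => hi ((h1 u).mpr hh))
    have hv := h2 _ (fun hh => hi (huv ▸ (h1 v).mpr hh))
    rw [hu, hv]

lemma powerset_eq_image_suppF :
    (Finset.univ : Finset (Fin d)).powerset = Finset.univ.image (suppF (d := d)) := by
  ext s
  simp only [Finset.mem_powerset, Finset.subset_univ, true_iff, Finset.mem_image]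
  refine ⟨fun i => if i ∈ s then 1 else 0, Finset.mem_univ _, ?_⟩
  ext i
  simp only [suppF, Finset.mem_filter, Finset.mem_univ, true_and]
  by_cases hi : i ∈ s
  · simp [hi]
  · simp [hi]

lemma card_vtx : Fintype.card (Vtx d) = 2 ^ d := by
  rw [Fintype.card_fun]
  rw [ZMod.card 2, Fintype.card_fin]

lemma arith (d m : ℕ) (hm : 1 ≤ m) (hd : m ≤ d) :
    (m - 1) * 2 ^ d - ∑ j ∈ Finset.range (m - 1), (m - 1 - j) * d.choose j ≤
      ∑ u : Vtx d, min (m - 1) (suppF u).card := by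
  rw [tsub_le_iff_right]
  have hsplit : ∀ u : Vtx d, (m - 1) = min (m - 1) (suppF u).card + ((m - 1) - (suppF u).card) := by
    intro u
    omega
  have hconst : ∑ u : Vtx d, (m - 1) = (m - 1) * 2 ^ d := by
    rw [Finset.sum_const, Finset.card_univ, card_vtx, smul_eq_mul, mul_comm]
  have hdeficit : ∑ u : Vtx d, ((m - 1) - (suppF u).card)
      = ∑ j ∈ Finset.range (m - 1), (m - 1 - j) * d.choose j := by
    have h1 : ∑ u : Vtx d, ((m - 1) - (suppF u).card)
        = ∑ s ∈ (Finset.univ : Finset (Fin d)).powerset, ((m - 1) - s.card) := by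
      rw [powerset_eq_image_suppF,
        Finset.sum_image (fun u _ v _ h => suppF_injective h)]
    rw [h1, Finset.sum_powerset_apply_card (fun j => (m - 1) - j)]
    have hcardu : (Finset.univ : Finset (Fin d)).card = d := by
      rw [Finset.card_univ, Fintype.card_fin]
    rw [hcardu]
    have hsub : Finset.range (m - 1) ⊆ Finset.range (d + 1) := by
      intro j hj
      rw [Finset.mem_range] at hj ⊢
      omega
    have hout : ∀ j ∈ Finset.range (d + 1), j ∉ Finset.range (m - 1) →
        d.choose j • (m - 1 - j) = 0 := by
      intro j _ hj
      rw [Finset.mem_range] at hj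
      have hz : m - 1 - j = 0 := by omega
      rw [hz, smul_zero]
    rw [← Finset.sum_subset hsub hout]
    apply Finset.sum_congr rfl
    intro j _
    rw [smul_eq_mul, mul_comm]
  apply le_of_eq
  calc (m - 1) * 2 ^ d = ∑ u : Vtx d, (m - 1) := hconst.symm
    _ = ∑ u : Vtx d, (min (m - 1) (suppF u).card + ((m - 1) - (suppF u).card)) := by
        apply Finset.sum_congr rfl
        intro u _
        exact hsplit u
    _ = ∑ u : Vtx d, min (m - 1) (suppF u).card + ∑ u : Vtx d, ((m - 1) - (suppF u).card) :=
        Finset.sum_add_distrib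
    _ = ∑ u : Vtx d, min (m - 1) (suppF u).card
        + ∑ j ∈ Finset.range (m - 1), (m - 1 - j) * d.choose j := by rw [hdeficit]

end Wsat

theorem stmt_6 (d m : ℕ) (hm : 1 ≤ m) (hd : m ≤ d) :
    (m - 1) * 2 ^ d - ∑ j ∈ Finset.range (m - 1), (m - 1 - j) * d.choose j ≤
      wsatNum (cube d) (cube m) := by
  classical
  have hmr : m = (m - 1) + 1 := by omega
  rw [wsatNum]
  apply le_csInf
  · refine ⟨(cube d).edgeSet.ncard, cube d, ⟨le_refl _, 0, fun _ => cube d, rfl, rfl, ?_⟩, rfl⟩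
    intro i hi
    exact absurd hi (Nat.not_lt_zero i)
  · rintro n ⟨G, hws, rfl⟩
    calc (m - 1) * 2 ^ d - ∑ j ∈ Finset.range (m - 1), (m - 1 - j) * d.choose j
        ≤ ∑ u : Wsat.Vtx d, min (m - 1) (Wsat.suppF u).card := Wsat.arith d m hm hd
      _ ≤ G.edgeSet.ncard := Wsat.card_le_of_ws hmr hws
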